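/- If M is a maximal orthogonal partial Latin square of order n with exactly n²/3 filled cells, then every row, every column, every first-entry symbol and every second-entry symbol has frequency exactly n/3 (in particular 3 divides n). Conversely if every row has frequency n/3 then M has n²/3 filled cells. -/

import Mathlib

/-- An orthogonal partial Latin square of order `n` (superimposed form):
each first-entry symbol appears at most once per row and per column, each
second-entry symbol appears at most once per row and per column, and each
ordered pair of symbols occurs in at most one cell. -/
def IsOPLS {n : ℕ} (M : Fin n → Fin n → Option (Fin n × Fin n)) : Prop :=
  (∀ r c c' p q, M r c = some p → M r c' = some q → p.1 = q.1 → c = c') ∧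
  (∀ r r' c p q, M r c = some p → M r' c = some q → p.1 = q.1 → r = r') ∧
  (∀ r c c' p q, M r c = some p → M r c' = some q → p.2 = q.2 → c = c') ∧
  (∀ r r' c p q, M r c = some p → M r' c = some q → p.2 = q.2 → r = r') ∧
  (∀ r c r' c' p, M r c = some p → M r' c' = some p → r = r' ∧ c = c')

/-- A maximal OPLS: no entry pair can be inserted into any empty cell. -/
def IsMaximalOPLS {n : ℕ} (M : Fin n → Fin n → Option (Fin n × Fin n)) : Prop :=
  IsOPLS M ∧ ∀ r c (p : Fin n × Fin n), M r c = none →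
    ¬ IsOPLS (fun r' c' => if r' = r ∧ c' = c then some p else M r' c')

/-- Number of filled cells. -/
def oplsSize {n : ℕ} (M : Fin n → Fin n → Option (Fin n × Fin n)) : ℕ :=
  (Finset.univ.filter (fun rc : Fin n × Fin n => (M rc.1 rc.2).isSome)).card

def oplsRowFreq {n : ℕ} (M : Fin n → Fin n → Option (Fin n × Fin n)) (r : Fin n) : ℕ :=
  (Finset.univ.filter (fun c : Fin n => (M r c).isSome)).card

def oplsColFreq {n : ℕ} (M : Fin n → Fin n → Option (Fin n × Fin n)) (c : Fin n) : ℕ :=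
  (Finset.univ.filter (fun r : Fin n => (M r c).isSome)).card

def oplsFstFreq {n : ℕ} (M : Fin n → Fin n → Option (Fin n × Fin n)) (s : Fin n) : ℕ :=
  (Finset.univ.filter (fun rc : Fin n × Fin n => (M rc.1 rc.2).map Prod.fst = some s)).card

def oplsSndFreq {n : ℕ} (M : Fin n → Fin n → Option (Fin n × Fin n)) (s : Fin n) : ℕ :=
  (Finset.univ.filter (fun rc : Fin n × Fin n => (M rc.1 rc.2).map Prod.snd = some s)).card


open Finset


lemma lemE {α β : Type*} [DecidableEq α] [DecidableEq β] (m : ℕ)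
    (Y : Finset α) (Z : Finset β) (hY : Y.card = m) (hZ : Z.card = m)
    (p : α → ℕ) (q : β → ℕ) (E : α → β → Prop) [∀ a b, Decidable (E a b)]
    (hcov : ∀ a ∈ Y, ∀ b ∈ Z, ¬ E a b → m ≤ p a + q b)
    (hdegA : ∀ a ∈ Y, (Z.filter (fun b => E a b)).card ≤ p a)
    (hdegB : ∀ b ∈ Z, (Y.filter (fun a => E a b)).card ≤ q b) :
    m * m ≤ (∑ a ∈ Y, p a) + (∑ b ∈ Z, q b) := by
  rcases Nat.eq_zero_or_pos m with hm | hm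
  · simp [hm]
  have hYne : Y.Nonempty := Finset.card_pos.mp (by omega)
  have hZne : Z.Nonempty := Finset.card_pos.mp (by omega)
  obtain ⟨a₀, ha₀Y, ha₀⟩ := Finset.exists_min_image Y p hYne
  obtain ⟨b₀, hb₀Z, hb₀⟩ := Finset.exists_min_image Z q hZne
  set s := p a₀ with hs
  set t := q b₀ with ht
  by_cases hst : m ≤ s + t
  · have h1 : m * s ≤ ∑ a ∈ Y, p a := by
      have := Finset.card_nsmul_le_sum Y p s ha₀
      rwa [hY, smul_eq_mul] at this
    have h2 : m * t ≤ ∑ b ∈ Z, q b := by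
      have := Finset.card_nsmul_le_sum Z q t hb₀
      rwa [hZ, smul_eq_mul] at this
    nlinarith
  · push_neg at hst
    -- P side
    set Nb := Y.filter (fun a => E a b₀) with hNb
    have hNbY : Nb ⊆ Y := Finset.filter_subset _ _
    set δ := Nb.card with hδdef
    have hδ : δ ≤ t := hdegB b₀ hb₀Z
    set k := (Y \ Nb).card with hkdef
    have hk : k + δ = m := by
      rw [hkdef, hδdef, ← hY]
      exact Finset.card_sdiff_add_card_eq_card hNbY
    have sum1 : δ * s ≤ ∑ a ∈ Nb, p a := by
      have := Finset.card_nsmul_le_sum Nb p s (fun a ha => ha₀ a (hNbY ha))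
      rwa [smul_eq_mul] at this
    have sum2 : k * m ≤ (∑ a ∈ Y \ Nb, p a) + k * t := by
      have hpt : ∀ a ∈ Y \ Nb, m ≤ p a + t := by
        intro a ha
        rw [Finset.mem_sdiff] at ha
        have hnE : ¬ E a b₀ := by
          intro hE
          exact ha.2 (Finset.mem_filter.mpr ⟨ha.1, hE⟩)
        exact hcov a ha.1 b₀ hb₀Z hnE
      calc k * m = ∑ _a ∈ Y \ Nb, m := by rw [Finset.sum_const, smul_eq_mul]
        _ ≤ ∑ a ∈ Y \ Nb, (p a + t) := Finset.sum_le_sum hpt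
        _ = (∑ a ∈ Y \ Nb, p a) + k * t := by rw [Finset.sum_add_distrib, Finset.sum_const, smul_eq_mul]
    have splitP : (∑ a ∈ Y \ Nb, p a) + (∑ a ∈ Nb, p a) = ∑ a ∈ Y, p a :=
      Finset.sum_sdiff hNbY
    -- Q side
    set Na := Z.filter (fun b => E a₀ b) with hNa
    have hNaZ : Na ⊆ Z := Finset.filter_subset _ _
    set δ' := Na.card with hδ'def
    have hδ' : δ' ≤ s := hdegA a₀ ha₀Y
    set k' := (Z \ Na).card with hk'def
    have hk' : k' + δ' = m := by
      rw [hk'def, hδ'def, ← hZ]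
      exact Finset.card_sdiff_add_card_eq_card hNaZ
    have sum1' : δ' * t ≤ ∑ b ∈ Na, q b := by
      have := Finset.card_nsmul_le_sum Na q t (fun b hb => hb₀ b (hNaZ hb))
      rwa [smul_eq_mul] at this
    have sum2' : k' * m ≤ (∑ b ∈ Z \ Na, q b) + k' * s := by
      have hqs : ∀ b ∈ Z \ Na, m ≤ q b + s := by
        intro b hb
        rw [Finset.mem_sdiff] at hb
        have hnE : ¬ E a₀ b := by
          intro hE
          exact hb.2 (Finset.mem_filter.mpr ⟨hb.1, hE⟩)
        have := hcov a₀ ha₀Y b hb.1 hnE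
        omega
      calc k' * m = ∑ _b ∈ Z \ Na, m := by rw [Finset.sum_const, smul_eq_mul]
        _ ≤ ∑ b ∈ Z \ Na, (q b + s) := Finset.sum_le_sum hqs
        _ = (∑ b ∈ Z \ Na, q b) + k' * s := by rw [Finset.sum_add_distrib, Finset.sum_const, smul_eq_mul]
    have splitQ : (∑ b ∈ Z \ Na, q b) + (∑ b ∈ Na, q b) = ∑ b ∈ Z, q b :=
      Finset.sum_sdiff hNaZ
    -- assemble over ℤ
    have hfact : (0:ℤ) ≤ ((m:ℤ) - s - t) * ((m:ℤ) - δ - δ') := by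
      apply mul_nonneg
      · omega
      · omega
    have hPn : δ * s + k * m ≤ (∑ a ∈ Y, p a) + k * t := by linarith
    have hQn : δ' * t + k' * m ≤ (∑ b ∈ Z, q b) + k' * s := by linarith
    have hPZ : (δ:ℤ) * s + (k:ℤ) * m ≤ ((∑ a ∈ Y, p a : ℕ) : ℤ) + (k:ℤ) * t := by
      exact_mod_cast hPn
    have hQZ : (δ':ℤ) * t + (k':ℤ) * m ≤ ((∑ b ∈ Z, q b : ℕ) : ℤ) + (k':ℤ) * s := by
      exact_mod_cast hQn
    have hkZ : (k:ℤ) = (m:ℤ) - δ := by omega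
    have hk'Z : (k':ℤ) = (m:ℤ) - δ' := by omega
    have goal : ((m:ℤ)) * m ≤ ((∑ a ∈ Y, p a : ℕ) : ℤ) + ((∑ b ∈ Z, q b : ℕ) : ℤ) := by
      nlinarith [hfact, hPZ, hQZ]
    exact_mod_cast goal

lemma insert_isOPLS {n : ℕ} {M : Fin n → Fin n → Option (Fin n × Fin n)} (hM : IsOPLS M)
    (r c a b : Fin n)
    (h1 : ∀ c', (M r c').map Prod.fst ≠ some a)
    (h2 : ∀ r', (M r' c).map Prod.fst ≠ some a)
    (h3 : ∀ c', (M r c').map Prod.snd ≠ some b)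
    (h4 : ∀ r', (M r' c).map Prod.snd ≠ some b)
    (h5 : ∀ r' c', M r' c' ≠ some (a, b)) :
    IsOPLS (fun r' c' => if r' = r ∧ c' = c then some (a, b) else M r' c') := by
  obtain ⟨A1, A2, A3, A4, A5⟩ := hM
  refine ⟨?_, ?_, ?_, ?_, ?_⟩
  · intro r' c₁ c₂ p q hp hq hfst
    dsimp only at hp hq
    by_cases e1 : r' = r ∧ c₁ = c <;> by_cases e2 : r' = r ∧ c₂ = c
    · rw [e1.2, e2.2]
    · rw [if_pos e1] at hp; rw [if_neg e2] at hq
      exfalso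
      apply h1 c₂
      rw [e1.1] at hq
      rw [hq]
      have : p = (a, b) := by injection hp with h; exact h.symm
      simp [this] at hfst
      simp [← hfst]
    · rw [if_neg e1] at hp; rw [if_pos e2] at hq
      exfalso
      apply h1 c₁
      rw [e2.1] at hp
      rw [hp]
      have : q = (a, b) := by injection hq with h; exact h.symm
      simp [this] at hfst
      simp [hfst]
    · rw [if_neg e1] at hp; rw [if_neg e2] at hq
      exact A1 r' c₁ c₂ p q hp hq hfst
  · intro r₁ r₂ c' p q hp hq hfst
    dsimp only at hp hq
    by_cases e1 : r₁ = r ∧ c' = c <;> by_cases e2 : r₂ = r ∧ c' = c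
    · rw [e1.1, e2.1]
    · rw [if_pos e1] at hp; rw [if_neg e2] at hq
      exfalso
      apply h2 r₂
      rw [e1.2] at hq
      rw [hq]
      have : p = (a, b) := by injection hp with h; exact h.symm
      simp [this] at hfst
      simp [← hfst]
    · rw [if_neg e1] at hp; rw [if_pos e2] at hq
      exfalso
      apply h2 r₁
      rw [e2.2] at hp
      rw [hp]
      have : q = (a, b) := by injection hq with h; exact h.symm
      simp [this] at hfst
      simp [hfst]
    · rw [if_neg e1] at hp; rw [if_neg e2] at hq
      exact A2 r₁ r₂ c' p q hp hq hfst
  · intro r' c₁ c₂ p q hp hq hsnd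
    dsimp only at hp hq
    by_cases e1 : r' = r ∧ c₁ = c <;> by_cases e2 : r' = r ∧ c₂ = c
    · rw [e1.2, e2.2]
    · rw [if_pos e1] at hp; rw [if_neg e2] at hq
      exfalso
      apply h3 c₂
      rw [e1.1] at hq
      rw [hq]
      have : p = (a, b) := by injection hp with h; exact h.symm
      simp [this] at hsnd
      simp [← hsnd]
    · rw [if_neg e1] at hp; rw [if_pos e2] at hq
      exfalso
      apply h3 c₁
      rw [e2.1] at hp
      rw [hp]
      have : q = (a, b) := by injection hq with h; exact h.symm
      simp [this] at hsnd
      simp [hsnd]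
    · rw [if_neg e1] at hp; rw [if_neg e2] at hq
      exact A3 r' c₁ c₂ p q hp hq hsnd
  · intro r₁ r₂ c' p q hp hq hsnd
    dsimp only at hp hq
    by_cases e1 : r₁ = r ∧ c' = c <;> by_cases e2 : r₂ = r ∧ c' = c
    · rw [e1.1, e2.1]
    · rw [if_pos e1] at hp; rw [if_neg e2] at hq
      exfalso
      apply h4 r₂
      rw [e1.2] at hq
      rw [hq]
      have : p = (a, b) := by injection hp with h; exact h.symm
      simp [this] at hsnd
      simp [← hsnd]
    · rw [if_neg e1] at hp; rw [if_pos e2] at hq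
      exfalso
      apply h4 r₁
      rw [e2.2] at hp
      rw [hp]
      have : q = (a, b) := by injection hq with h; exact h.symm
      simp [this] at hsnd
      simp [hsnd]
    · rw [if_neg e1] at hp; rw [if_neg e2] at hq
      exact A4 r₁ r₂ c' p q hp hq hsnd
  · intro r₁ c₁ r₂ c₂ p hp hq
    dsimp only at hp hq
    by_cases e1 : r₁ = r ∧ c₁ = c <;> by_cases e2 : r₂ = r ∧ c₂ = c
    · exact ⟨e1.1.trans e2.1.symm, e1.2.trans e2.2.symm⟩
    · rw [if_pos e1] at hp; rw [if_neg e2] at hq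
      exfalso
      have : p = (a, b) := by injection hp with h; exact h.symm
      exact h5 r₂ c₂ (by rw [hq, this])
    · rw [if_neg e1] at hp; rw [if_pos e2] at hq
      exfalso
      have : p = (a, b) := by injection hq with h; exact h.symm
      exact h5 r₁ c₁ (by rw [hp, this])
    · rw [if_neg e1] at hp; rw [if_neg e2] at hq
      exact A5 r₁ c₁ r₂ c₂ p hp hq

lemma cover_of_maximal {n : ℕ} {M : Fin n → Fin n → Option (Fin n × Fin n)}
    (hM : IsMaximalOPLS M) (r c a b : Fin n) :
    (∃ p, M r c = some p) ∨
    (∃ c', (M r c').map Prod.fst = some a) ∨ (∃ r', (M r' c).map Prod.fst = some a) ∨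
    (∃ c', (M r c').map Prod.snd = some b) ∨ (∃ r', (M r' c).map Prod.snd = some b) ∨
    (∃ r' c', M r' c' = some (a, b)) := by
  by_contra h
  push_neg at h
  obtain ⟨h0, h1, h2, h3, h4, h5⟩ := h
  have hnone : M r c = none := by
    cases hmc : M r c with
    | none => rfl
    | some p => exact absurd hmc (h0 p)
  exact hM.2 r c (a, b) hnone (insert_isOPLS hM.1 r c a b h1 h2 h3 h4 h5)

set_option maxHeartbeats 1000000 in
lemma key {ι : Type*} [Fintype ι] [DecidableEq ι] {n μ : ℕ}
    (π₀ π₁ π₂ π₃ : ι → Fin n)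
    (pack01 : ∀ x y, π₀ x = π₀ y → π₁ x = π₁ y → x = y)
    (pack02 : ∀ x y, π₀ x = π₀ y → π₂ x = π₂ y → x = y)
    (pack03 : ∀ x y, π₀ x = π₀ y → π₃ x = π₃ y → x = y)
    (cov : ∀ v₀ v₁ v₂ v₃ : Fin n, ∃ x : ι,
      (π₀ x = v₀ ∧ π₁ x = v₁) ∨ (π₀ x = v₀ ∧ π₂ x = v₂) ∨ (π₀ x = v₀ ∧ π₃ x = v₃) ∨
      (π₁ x = v₁ ∧ π₂ x = v₂) ∨ (π₁ x = v₁ ∧ π₃ x = v₃) ∨ (π₂ x = v₂ ∧ π₃ x = v₃))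
    (hN : 3 * Fintype.card ι = n ^ 2)
    (r₀ : Fin n) (hμ : (Finset.univ.filter fun x => π₀ x = r₀).card = μ)
    (h2 : ∀ v, μ ≤ (Finset.univ.filter fun x => π₂ x = v).card)
    (h3 : ∀ v, μ ≤ (Finset.univ.filter fun x => π₃ x = v).card) :
    n = 3 * μ := by
  classical
  set fib : Finset ι := Finset.univ.filter fun x => π₀ x = r₀ with hfib
  have memfib : ∀ x, x ∈ fib ↔ π₀ x = r₀ := by
    intro x; simp [hfib]
  -- the three complements
  set Xc : Finset (Fin n) := fib.image π₁ with hXcdef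
  set Yc : Finset (Fin n) := fib.image π₂ with hYcdef
  set Zc : Finset (Fin n) := fib.image π₃ with hZcdef
  have hXc : Xc.card = μ := by
    rw [hXcdef, Finset.card_image_of_injOn, hμ]
    intro x hx y hy hxy
    exact pack01 x y (((memfib x).mp hx).trans ((memfib y).mp hy).symm) hxy
  have hYc : Yc.card = μ := by
    rw [hYcdef, Finset.card_image_of_injOn, hμ]
    intro x hx y hy hxy
    exact pack02 x y (((memfib x).mp hx).trans ((memfib y).mp hy).symm) hxy
  have hZc : Zc.card = μ := by
    rw [hZcdef, Finset.card_image_of_injOn, hμ]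
    intro x hx y hy hxy
    exact pack03 x y (((memfib x).mp hx).trans ((memfib y).mp hy).symm) hxy
  have hμn : μ ≤ n := by
    rw [← hXc]
    simpa using Finset.card_le_univ Xc
  set m := n - μ with hmdef
  have hmn : m + μ = n := by omega
  set X : Finset (Fin n) := Finset.univ \ Xc with hXdef
  set Y : Finset (Fin n) := Finset.univ \ Yc with hYdef
  set Z : Finset (Fin n) := Finset.univ \ Zc with hZdef
  have hXcard : X.card = m := by
    rw [hXdef, Finset.card_sdiff_of_subset (Finset.subset_univ _), Finset.card_univ, Fintype.card_fin, hXc]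
  have hYcard : Y.card = m := by
    rw [hYdef, Finset.card_sdiff_of_subset (Finset.subset_univ _), Finset.card_univ, Fintype.card_fin, hYc]
  have hZcard : Z.card = m := by
    rw [hZdef, Finset.card_sdiff_of_subset (Finset.subset_univ _), Finset.card_univ, Fintype.card_fin, hZc]
  set p : Fin n → ℕ := fun a => (Finset.univ.filter fun x => π₂ x = a).card with hpdef
  set q : Fin n → ℕ := fun b => (Finset.univ.filter fun x => π₃ x = b).card with hqdef
  set E : Fin n → Fin n → Prop := fun a b => ∃ x : ι, π₂ x = a ∧ π₃ x = b with hEdef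
  -- degree bounds
  have hdegA : ∀ a ∈ Y, (Z.filter (fun b => E a b)).card ≤ p a := by
    intro a _
    apply Finset.card_le_card_of_surjOn π₃
    intro b hb
    simp only [Finset.coe_filter, Set.mem_setOf_eq] at hb
    obtain ⟨x, hx2, hx3⟩ := hb.2
    exact ⟨x, by simp [hx2], hx3⟩
  have hdegB : ∀ b ∈ Z, (Y.filter (fun a => E a b)).card ≤ q b := by
    intro b _
    apply Finset.card_le_card_of_surjOn π₂
    intro a ha
    simp only [Finset.coe_filter, Set.mem_setOf_eq] at ha
    obtain ⟨x, hx2, hx3⟩ := ha.2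
    exact ⟨x, by simp [hx3], hx2⟩
  -- covering
  have hcovE : ∀ a ∈ Y, ∀ b ∈ Z, ¬ E a b → m ≤ p a + q b := by
    intro a ha b hb hE
    have hsub : X ⊆ (X.filter fun c => ∃ x, π₁ x = c ∧ π₂ x = a) ∪
        (X.filter fun c => ∃ x, π₁ x = c ∧ π₃ x = b) := by
      intro c hc
      obtain ⟨x, hx⟩ := cov r₀ c a b
      have hXne : ∀ x : ι, ¬(π₀ x = r₀ ∧ π₁ x = c) := by
        intro x hx0
        exact (Finset.mem_sdiff.mp hc).2
          (Finset.mem_image.mpr ⟨x, (memfib x).mpr hx0.1, hx0.2⟩)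
      have hYne : ∀ x : ι, ¬(π₀ x = r₀ ∧ π₂ x = a) := by
        intro x hx0
        exact (Finset.mem_sdiff.mp ha).2
          (Finset.mem_image.mpr ⟨x, (memfib x).mpr hx0.1, hx0.2⟩)
      have hZne : ∀ x : ι, ¬(π₀ x = r₀ ∧ π₃ x = b) := by
        intro x hx0
        exact (Finset.mem_sdiff.mp hb).2
          (Finset.mem_image.mpr ⟨x, (memfib x).mpr hx0.1, hx0.2⟩)
      rcases hx with h | h | h | h | h | h
      · exact absurd h (hXne x)
      · exact absurd h (hYne x)
      · exact absurd h (hZne x)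
      · exact Finset.mem_union_left _ (Finset.mem_filter.mpr ⟨hc, x, h.1, h.2⟩)
      · exact Finset.mem_union_right _ (Finset.mem_filter.mpr ⟨hc, x, h.1, h.2⟩)
      · exact absurd ⟨x, h.1, h.2⟩ hE
    have hc1 : (X.filter fun c => ∃ x, π₁ x = c ∧ π₂ x = a).card ≤ p a := by
      apply Finset.card_le_card_of_surjOn π₁
      intro c hc
      simp only [Finset.coe_filter, Set.mem_setOf_eq] at hc
      obtain ⟨x, hx1, hx2⟩ := hc.2
      exact ⟨x, by simp [hx2], hx1⟩
    have hc2 : (X.filter fun c => ∃ x, π₁ x = c ∧ π₃ x = b).card ≤ q b := by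
      apply Finset.card_le_card_of_surjOn π₁
      intro c hc
      simp only [Finset.coe_filter, Set.mem_setOf_eq] at hc
      obtain ⟨x, hx1, hx3⟩ := hc.2
      exact ⟨x, by simp [hx3], hx1⟩
    calc m = X.card := hXcard.symm
      _ ≤ ((X.filter fun c => ∃ x, π₁ x = c ∧ π₂ x = a) ∪
          (X.filter fun c => ∃ x, π₁ x = c ∧ π₃ x = b)).card := Finset.card_le_card hsub
      _ ≤ (X.filter fun c => ∃ x, π₁ x = c ∧ π₂ x = a).card +
          (X.filter fun c => ∃ x, π₁ x = c ∧ π₃ x = b).card := Finset.card_union_le _ _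
      _ ≤ p a + q b := Nat.add_le_add hc1 hc2
  -- main inequality
  have main : m * m ≤ (∑ a ∈ Y, p a) + (∑ b ∈ Z, q b) :=
    lemE m Y Z hYcard hZcard p q E hcovE hdegA hdegB
  -- budgets
  have sum_fib2 : ∑ v : Fin n, p v = Fintype.card ι := by
    rw [← Finset.card_univ]
    exact (Finset.card_eq_sum_card_fiberwise (fun x _ => Finset.mem_univ (π₂ x))).symm
  have sum_fib3 : ∑ v : Fin n, q v = Fintype.card ι := by
    rw [← Finset.card_univ]
    exact (Finset.card_eq_sum_card_fiberwise (fun x _ => Finset.mem_univ (π₃ x))).symm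
  have budgetY : (∑ a ∈ Y, p a) + μ * μ ≤ Fintype.card ι := by
    have hsplit : (∑ a ∈ Y, p a) + (∑ a ∈ Yc, p a) = ∑ v : Fin n, p v :=
      Finset.sum_sdiff (Finset.subset_univ Yc)
    have hYc2 : μ * μ ≤ ∑ a ∈ Yc, p a := by
      have := Finset.card_nsmul_le_sum Yc p μ (fun a _ => h2 a)
      rwa [hYc, smul_eq_mul] at this
    linarith [sum_fib2, hsplit, hYc2]
  have budgetZ : (∑ b ∈ Z, q b) + μ * μ ≤ Fintype.card ι := by
    have hsplit : (∑ b ∈ Z, q b) + (∑ b ∈ Zc, q b) = ∑ v : Fin n, q v :=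
      Finset.sum_sdiff (Finset.subset_univ Zc)
    have hZc2 : μ * μ ≤ ∑ b ∈ Zc, q b := by
      have := Finset.card_nsmul_le_sum Zc q μ (fun b _ => h3 b)
      rwa [hZc, smul_eq_mul] at this
    linarith [sum_fib3, hsplit, hZc2]
  -- final arithmetic
  have H : m * m + 2 * (μ * μ) ≤ 2 * Fintype.card ι := by linarith
  have H2 : 3 * (m * m) + 6 * (μ * μ) ≤ 2 * n ^ 2 := by
    calc 3 * (m * m) + 6 * (μ * μ) = 3 * (m * m + 2 * (μ * μ)) := by ring
      _ ≤ 3 * (2 * Fintype.card ι) := Nat.mul_le_mul_left 3 H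
      _ = 2 * (3 * Fintype.card ι) := by ring
      _ = 2 * n ^ 2 := by rw [hN]
  have hZsq : ((m : ℤ) - 2 * μ) ^ 2 ≤ 0 := by
    have hnZ : (n : ℤ) = (m : ℤ) + μ := by exact_mod_cast hmn.symm
    have H2Z : 3 * ((m:ℤ) * m) + 6 * ((μ:ℤ) * μ) ≤ 2 * (n:ℤ) ^ 2 := by exact_mod_cast H2
    nlinarith [H2Z, hnZ]
  have hm2 : (m : ℤ) = 2 * μ := by
    have h0 : ((m : ℤ) - 2 * μ) ^ 2 = 0 := le_antisymm hZsq (sq_nonneg _)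
    have := pow_eq_zero_iff (n := 2) (by norm_num) |>.mp h0
    linarith
  have : m = 2 * μ := by exact_mod_cast hm2
  omega

section glue

variable {n : ℕ} (M : Fin n → Fin n → Option (Fin n × Fin n))

/-- the set of filled entries, as quadruples -/
def QD : Type := {x : (Fin n × Fin n) × (Fin n × Fin n) // M x.1.1 x.1.2 = some x.2}

instance : Fintype (QD M) := by unfold QD; infer_instance
instance : DecidableEq (QD M) := by unfold QD; infer_instance

def pr0 : QD M → Fin n := fun x => x.val.1.1
def pr1 : QD M → Fin n := fun x => x.val.1.2
def pr2 : QD M → Fin n := fun x => x.val.2.1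
def pr3 : QD M → Fin n := fun x => x.val.2.2

variable {M}

lemma qd_ext {x y : QD M} (h1 : x.val.1 = y.val.1) : x = y := by
  have hx := x.prop
  have hy := y.prop
  apply Subtype.ext
  rw [h1] at hx
  rw [hx] at hy
  exact Prod.ext h1 (Option.some_inj.mp hy)

variable (hM : IsOPLS M)

lemma pack01' : ∀ x y : QD M, pr0 M x = pr0 M y → pr1 M x = pr1 M y → x = y := by
  intro x y h0 h1
  exact qd_ext (Prod.ext h0 h1)

include hM in
lemma pack02' : ∀ x y : QD M, pr0 M x = pr0 M y → pr2 M x = pr2 M y → x = y := by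
  intro x y h0 h2
  simp only [pr0] at h0
  simp only [pr2] at h2
  have hx := x.prop
  have hy := y.prop
  rw [h0] at hx
  have := hM.1 (y.val.1.1) (x.val.1.2) (y.val.1.2) x.val.2 y.val.2 hx hy h2
  exact qd_ext (Prod.ext h0 this)

include hM in
lemma pack03' : ∀ x y : QD M, pr0 M x = pr0 M y → pr3 M x = pr3 M y → x = y := by
  intro x y h0 h3
  simp only [pr0] at h0
  simp only [pr3] at h3
  have hx := x.prop
  have hy := y.prop
  rw [h0] at hx
  have := hM.2.2.1 (y.val.1.1) (x.val.1.2) (y.val.1.2) x.val.2 y.val.2 hx hy h3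
  exact qd_ext (Prod.ext h0 this)

include hM in
lemma pack12' : ∀ x y : QD M, pr1 M x = pr1 M y → pr2 M x = pr2 M y → x = y := by
  intro x y h1 h2
  simp only [pr1] at h1
  simp only [pr2] at h2
  have hx := x.prop
  have hy := y.prop
  rw [h1] at hx
  have := hM.2.1 (x.val.1.1) (y.val.1.1) (y.val.1.2) x.val.2 y.val.2 hx hy h2
  exact qd_ext (Prod.ext this h1)

include hM in
lemma pack13' : ∀ x y : QD M, pr1 M x = pr1 M y → pr3 M x = pr3 M y → x = y := by
  intro x y h1 h3
  simp only [pr1] at h1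
  simp only [pr3] at h3
  have hx := x.prop
  have hy := y.prop
  rw [h1] at hx
  have := hM.2.2.2.1 (x.val.1.1) (y.val.1.1) (y.val.1.2) x.val.2 y.val.2 hx hy h3
  exact qd_ext (Prod.ext this h1)

include hM in
lemma pack23' : ∀ x y : QD M, pr2 M x = pr2 M y → pr3 M x = pr3 M y → x = y := by
  intro x y h2 h3
  simp only [pr2] at h2
  simp only [pr3] at h3
  have hx := x.prop
  have hy := y.prop
  have hval : x.val.2 = y.val.2 := Prod.ext h2 h3
  rw [hval] at hx
  have := hM.2.2.2.2 (x.val.1.1) (x.val.1.2) (y.val.1.1) (y.val.1.2) y.val.2 hx hy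
  exact qd_ext (Prod.ext this.1 this.2)

lemma cov' (hMM : IsMaximalOPLS M) : ∀ v₀ v₁ v₂ v₃ : Fin n, ∃ x : QD M,
    (pr0 M x = v₀ ∧ pr1 M x = v₁) ∨ (pr0 M x = v₀ ∧ pr2 M x = v₂) ∨
    (pr0 M x = v₀ ∧ pr3 M x = v₃) ∨ (pr1 M x = v₁ ∧ pr2 M x = v₂) ∨
    (pr1 M x = v₁ ∧ pr3 M x = v₃) ∨ (pr2 M x = v₂ ∧ pr3 M x = v₃) := by
  intro v₀ v₁ v₂ v₃
  rcases cover_of_maximal hMM v₀ v₁ v₂ v₃ with ⟨p, hp⟩ | ⟨c', hc⟩ | ⟨r', hr⟩ | ⟨c', hc⟩ | ⟨r', hr⟩ | ⟨r', c', hrc⟩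
  · exact ⟨⟨((v₀, v₁), p), hp⟩, Or.inl ⟨rfl, rfl⟩⟩
  · obtain ⟨p, hp, hp1⟩ := Option.map_eq_some_iff.mp hc
    exact ⟨⟨((v₀, c'), p), hp⟩, Or.inr (Or.inl ⟨rfl, hp1⟩)⟩
  · obtain ⟨p, hp, hp1⟩ := Option.map_eq_some_iff.mp hr
    exact ⟨⟨((r', v₁), p), hp⟩, Or.inr (Or.inr (Or.inr (Or.inl ⟨rfl, hp1⟩)))⟩
  · obtain ⟨p, hp, hp2⟩ := Option.map_eq_some_iff.mp hc
    exact ⟨⟨((v₀, c'), p), hp⟩, Or.inr (Or.inr (Or.inl ⟨rfl, hp2⟩))⟩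
  · obtain ⟨p, hp, hp2⟩ := Option.map_eq_some_iff.mp hr
    exact ⟨⟨((r', v₁), p), hp⟩, Or.inr (Or.inr (Or.inr (Or.inr (Or.inl ⟨rfl, hp2⟩))))⟩
  · exact ⟨⟨((r', c'), (v₂, v₃)), hrc⟩, Or.inr (Or.inr (Or.inr (Or.inr (Or.inr ⟨rfl, rfl⟩))))⟩

variable (M)

lemma card_QD : Fintype.card (QD M) = oplsSize M := by
  classical
  rw [show Fintype.card (QD M) =
      (Finset.univ.filter fun x : (Fin n × Fin n) × (Fin n × Fin n) =>
        M x.1.1 x.1.2 = some x.2).card from Fintype.card_subtype _]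
  unfold oplsSize
  apply Finset.card_bij (fun x _ => x.1)
  · intro x hx
    simp only [Finset.mem_filter, Finset.mem_univ, true_and] at hx ⊢
    rw [hx]; rfl
  · intro x hx y hy hxy
    simp only [Finset.mem_filter, Finset.mem_univ, true_and] at hx hy
    rw [hxy] at hx
    rw [hx] at hy
    exact Prod.ext hxy (Option.some_inj.mp hy)
  · intro rc hrc
    simp only [Finset.mem_filter, Finset.mem_univ, true_and] at hrc
    exact ⟨(rc, (M rc.1 rc.2).get hrc), by simp, rfl⟩

lemma fib0_eq (r : Fin n) :
    (Finset.univ.filter fun x : QD M => pr0 M x = r).card = oplsRowFreq M r := by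
  classical
  unfold oplsRowFreq
  apply Finset.card_bij (fun x _ => pr1 M x)
  · intro x hx
    simp only [Finset.mem_filter, Finset.mem_univ, true_and] at hx ⊢
    have hp := x.prop
    simp only [pr0] at hx
    simp only [pr1]
    rw [hx] at hp
    rw [hp]; rfl
  · intro x hx y hy hxy
    simp only [Finset.mem_filter, Finset.mem_univ, true_and] at hx hy
    exact pack01' x y (hx.trans hy.symm) hxy
  · intro c hc
    simp only [Finset.mem_filter, Finset.mem_univ, true_and] at hc
    exact ⟨⟨((r, c), (M r c).get hc), by simp⟩, Finset.mem_filter.mpr ⟨Finset.mem_univ _, rfl⟩, rfl⟩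

lemma fib1_eq (c : Fin n) :
    (Finset.univ.filter fun x : QD M => pr1 M x = c).card = oplsColFreq M c := by
  classical
  unfold oplsColFreq
  apply Finset.card_bij (fun x _ => pr0 M x)
  · intro x hx
    simp only [Finset.mem_filter, Finset.mem_univ, true_and] at hx ⊢
    have hp := x.prop
    simp only [pr1] at hx
    simp only [pr0]
    rw [hx] at hp
    rw [hp]; rfl
  · intro x hx y hy hxy
    simp only [Finset.mem_filter, Finset.mem_univ, true_and] at hx hy
    exact pack01' x y hxy (hx.trans hy.symm)
  · intro r hr
    simp only [Finset.mem_filter, Finset.mem_univ, true_and] at hr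
    exact ⟨⟨((r, c), (M r c).get hr), by simp⟩, Finset.mem_filter.mpr ⟨Finset.mem_univ _, rfl⟩, rfl⟩

lemma fib2_eq (hM : IsOPLS M) (s : Fin n) :
    (Finset.univ.filter fun x : QD M => pr2 M x = s).card = oplsFstFreq M s := by
  classical
  unfold oplsFstFreq
  apply Finset.card_bij (fun x _ => x.val.1)
  · intro x hx
    simp only [Finset.mem_filter, Finset.mem_univ, true_and] at hx ⊢
    rw [x.prop]
    simpa [pr2] using congrArg some hx
  · intro x hx y hy hxy
    exact qd_ext hxy
  · intro rc hrc
    simp only [Finset.mem_filter, Finset.mem_univ, true_and] at hrc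
    obtain ⟨p, hp, hp1⟩ := Option.map_eq_some_iff.mp hrc
    exact ⟨⟨(rc, p), hp⟩, Finset.mem_filter.mpr ⟨Finset.mem_univ _, hp1⟩, rfl⟩

lemma fib3_eq (hM : IsOPLS M) (s : Fin n) :
    (Finset.univ.filter fun x : QD M => pr3 M x = s).card = oplsSndFreq M s := by
  classical
  unfold oplsSndFreq
  apply Finset.card_bij (fun x _ => x.val.1)
  · intro x hx
    simp only [Finset.mem_filter, Finset.mem_univ, true_and] at hx ⊢
    rw [x.prop]
    simpa [pr3] using congrArg some hx
  · intro x hx y hy hxy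
    exact qd_ext hxy
  · intro rc hrc
    simp only [Finset.mem_filter, Finset.mem_univ, true_and] at hrc
    obtain ⟨p, hp, hp2⟩ := Option.map_eq_some_iff.mp hrc
    exact ⟨⟨(rc, p), hp⟩, Finset.mem_filter.mpr ⟨Finset.mem_univ _, hp2⟩, rfl⟩

lemma sum_rowFreq : ∑ r, oplsRowFreq M r = oplsSize M := by
  classical
  rw [← card_QD M, ← Finset.card_univ,
    Finset.card_eq_sum_card_fiberwise (fun x (_ : x ∈ Finset.univ) => Finset.mem_univ (pr0 M x))]
  exact Finset.sum_congr rfl (fun r _ => (fib0_eq M r).symm)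

lemma sum_colFreq : ∑ c, oplsColFreq M c = oplsSize M := by
  classical
  rw [← card_QD M, ← Finset.card_univ,
    Finset.card_eq_sum_card_fiberwise (fun x (_ : x ∈ Finset.univ) => Finset.mem_univ (pr1 M x))]
  exact Finset.sum_congr rfl (fun c _ => (fib1_eq M c).symm)

lemma sum_fstFreq (hM : IsOPLS M) : ∑ s, oplsFstFreq M s = oplsSize M := by
  classical
  rw [← card_QD M, ← Finset.card_univ,
    Finset.card_eq_sum_card_fiberwise (fun x (_ : x ∈ Finset.univ) => Finset.mem_univ (pr2 M x))]
  exact Finset.sum_congr rfl (fun s _ => (fib2_eq M hM s).symm)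

lemma sum_sndFreq (hM : IsOPLS M) : ∑ s, oplsSndFreq M s = oplsSize M := by
  classical
  rw [← card_QD M, ← Finset.card_univ,
    Finset.card_eq_sum_card_fiberwise (fun x (_ : x ∈ Finset.univ) => Finset.mem_univ (pr3 M x))]
  exact Finset.sum_congr rfl (fun s _ => (fib3_eq M hM s).symm)

end glue


set_option maxHeartbeats 2000000 in
/-- A maximal OPLS(n) with exactly n²/3 filled cells has every row, column,
first-entry and second-entry frequency equal to n/3 (so 3 ∣ n); conversely if
every row frequency is n/3 then there are n²/3 filled cells. -/
theorem stmt_8 {n : ℕ} (M : Fin n → Fin n → Option (Fin n × Fin n))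
    (hM : IsMaximalOPLS M) :
    (3 * oplsSize M = n ^ 2 →
      (3 ∣ n ∧ (∀ r, 3 * oplsRowFreq M r = n) ∧ (∀ c, 3 * oplsColFreq M c = n) ∧
        (∀ s, 3 * oplsFstFreq M s = n) ∧ (∀ s, 3 * oplsSndFreq M s = n))) ∧
    ((∀ r, 3 * oplsRowFreq M r = n) → 3 * oplsSize M = n ^ 2) := by
  classical
  have hOP : IsOPLS M := hM.1
  constructor
  · intro hsize
    rcases Nat.eq_zero_or_pos n with hn | hn
    · subst hn
      exact ⟨⟨0, rfl⟩, fun r => r.elim0, fun c => c.elim0, fun s => s.elim0, fun s => s.elim0⟩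
    have hNQ : 3 * Fintype.card (QD M) = n ^ 2 := by rw [card_QD]; exact hsize
    set V : Finset ℕ :=
      ((Finset.univ.image (oplsRowFreq M)) ∪ (Finset.univ.image (oplsColFreq M))) ∪
      ((Finset.univ.image (oplsFstFreq M)) ∪ (Finset.univ.image (oplsSndFreq M))) with hV
    have hVne : V.Nonempty := by
      refine ⟨oplsRowFreq M ⟨0, hn⟩, ?_⟩
      rw [hV]
      exact Finset.mem_union_left _
        (Finset.mem_union_left _ (Finset.mem_image_of_mem _ (Finset.mem_univ _)))
    set μ := V.min' hVne with hμdef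
    have hminR : ∀ r, μ ≤ oplsRowFreq M r := by
      intro r
      apply Finset.min'_le
      rw [hV]
      exact Finset.mem_union_left _
        (Finset.mem_union_left _ (Finset.mem_image_of_mem _ (Finset.mem_univ r)))
    have hminC : ∀ c, μ ≤ oplsColFreq M c := by
      intro c
      apply Finset.min'_le
      rw [hV]
      exact Finset.mem_union_left _
        (Finset.mem_union_right _ (Finset.mem_image_of_mem _ (Finset.mem_univ c)))
    have hminF : ∀ s, μ ≤ oplsFstFreq M s := by
      intro s
      apply Finset.min'_le
      rw [hV]
      exact Finset.mem_union_right _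
        (Finset.mem_union_left _ (Finset.mem_image_of_mem _ (Finset.mem_univ s)))
    have hminS : ∀ s, μ ≤ oplsSndFreq M s := by
      intro s
      apply Finset.min'_le
      rw [hV]
      exact Finset.mem_union_right _
        (Finset.mem_union_right _ (Finset.mem_image_of_mem _ (Finset.mem_univ s)))
    have hb0 : ∀ v, μ ≤ (Finset.univ.filter fun x : QD M => pr0 M x = v).card :=
      fun v => (fib0_eq M v).symm ▸ hminR v
    have hb1 : ∀ v, μ ≤ (Finset.univ.filter fun x : QD M => pr1 M x = v).card :=
      fun v => (fib1_eq M v).symm ▸ hminC v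
    have hb2 : ∀ v, μ ≤ (Finset.univ.filter fun x : QD M => pr2 M x = v).card :=
      fun v => (fib2_eq M hOP v).symm ▸ hminF v
    have hb3 : ∀ v, μ ≤ (Finset.univ.filter fun x : QD M => pr3 M x = v).card :=
      fun v => (fib3_eq M hOP v).symm ▸ hminS v
    have hn3 : n = 3 * μ := by
      have hmem : μ ∈ (Finset.univ.image (oplsRowFreq M) ∪ Finset.univ.image (oplsColFreq M)) ∪
          (Finset.univ.image (oplsFstFreq M) ∪ Finset.univ.image (oplsSndFreq M)) :=
        Finset.min'_mem V hVne
      rcases Finset.mem_union.mp hmem with h | h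
      · rcases Finset.mem_union.mp h with h | h
        · obtain ⟨r₀, _, hr₀⟩ := Finset.mem_image.mp h
          exact key (pr0 M) (pr1 M) (pr2 M) (pr3 M) pack01' (pack02' hOP) (pack03' hOP)
            (cov' hM) hNQ r₀ (by rw [fib0_eq]; exact hr₀) hb2 hb3
        · obtain ⟨c₀, _, hc₀⟩ := Finset.mem_image.mp h
          exact key (pr1 M) (pr0 M) (pr2 M) (pr3 M)
            (fun x y h1 h0 => pack01' x y h0 h1)
            (pack12' hOP) (pack13' hOP)
            (fun v₀ v₁ v₂ v₃ => by obtain ⟨x, hx⟩ := cov' hM v₁ v₀ v₂ v₃; exact ⟨x, by tauto⟩)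
            hNQ c₀ (by rw [fib1_eq]; exact hc₀) hb2 hb3
      · rcases Finset.mem_union.mp h with h | h
        · obtain ⟨a₀, _, ha₀⟩ := Finset.mem_image.mp h
          exact key (pr2 M) (pr3 M) (pr0 M) (pr1 M)
            (pack23' hOP)
            (fun x y h2 h0 => pack02' hOP x y h0 h2)
            (fun x y h2 h1 => pack12' hOP x y h1 h2)
            (fun v₀ v₁ v₂ v₃ => by obtain ⟨x, hx⟩ := cov' hM v₂ v₃ v₀ v₁; exact ⟨x, by tauto⟩)
            hNQ a₀ (by rw [fib2_eq M hOP]; exact ha₀) hb0 hb1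
        · obtain ⟨b₀, _, hb₀⟩ := Finset.mem_image.mp h
          exact key (pr3 M) (pr2 M) (pr0 M) (pr1 M)
            (fun x y h3 h2 => pack23' hOP x y h2 h3)
            (fun x y h3 h0 => pack03' hOP x y h0 h3)
            (fun x y h3 h1 => pack13' hOP x y h1 h3)
            (fun v₀ v₁ v₂ v₃ => by obtain ⟨x, hx⟩ := cov' hM v₂ v₃ v₁ v₀; exact ⟨x, by tauto⟩)
            hNQ b₀ (by rw [fib3_eq M hOP]; exact hb₀) hb0 hb1
    have hsizeμ : oplsSize M = 3 * (μ * μ) := by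
      have h9 : n ^ 2 = 9 * (μ * μ) := by rw [hn3]; ring
      omega
    have hconst : ∀ (f : Fin n → ℕ), (∀ i, μ ≤ f i) → (∑ i, f i = oplsSize M) →
        ∀ i, f i = μ := by
      intro f hle hsum i
      have hsum' : ∑ _i : Fin n, μ = ∑ i, f i := by
        rw [hsum, Finset.sum_const, Finset.card_univ, Fintype.card_fin, smul_eq_mul,
          hsizeμ, hn3]
        ring
      have := (Finset.sum_eq_sum_iff_of_le (fun i _ => hle i)).mp hsum'
      exact (this i (Finset.mem_univ i)).symm
    refine ⟨⟨μ, hn3⟩, ?_, ?_, ?_, ?_⟩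
    · intro r
      rw [hconst (oplsRowFreq M) hminR (sum_rowFreq M) r]
      omega
    · intro c
      rw [hconst (oplsColFreq M) hminC (sum_colFreq M) c]
      omega
    · intro s
      rw [hconst (oplsFstFreq M) hminF (sum_fstFreq M hOP) s]
      omega
    · intro s
      rw [hconst (oplsSndFreq M) hminS (sum_sndFreq M hOP) s]
      omega
  · intro hrow
    calc 3 * oplsSize M = 3 * ∑ r, oplsRowFreq M r := by rw [sum_rowFreq]
      _ = ∑ r, 3 * oplsRowFreq M r := by rw [Finset.mul_sum]
      _ = ∑ _r : Fin n, n := Finset.sum_congr rfl (fun r _ => hrow r)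
      _ = n ^ 2 := by rw [Finset.sum_const, Finset.card_univ, Fintype.card_fin, smul_eq_mul]; ring
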